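/- Let a be a C² vector field on U, let the Γ^k_{ij} be of class C¹, let ρ ∈ C²(U), and let F ∈ C²(ℝ). Then pointwise on U: F'(ρ) Λ(ρ) − Λ(F(ρ)) = G_F(ρ) Λ(1) − F''(ρ) (a(ρ))², where Λ(1) = Div((Div a) a). -/

import Mathlib

open scoped BigOperators

/-- Partial derivative in the `j`-th coordinate direction. -/
noncomputable def pd {d : ℕ} (j : Fin d) (f : (Fin d → ℝ) → ℝ) (x : Fin d → ℝ) : ℝ :=
  fderiv ℝ f x (Pi.single j 1)

/-- Divergence of a vector field relative to the Christoffel symbols `Γ`: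
`DivVF X := ∂_j X^j + Γ^j_{kj} X^k`. -/
noncomputable def DivVF {d : ℕ} (Γ : Fin d → Fin d → Fin d → (Fin d → ℝ) → ℝ)
    (X : Fin d → (Fin d → ℝ) → ℝ) (x : Fin d → ℝ) : ℝ :=
  (∑ j, pd j (X j) x) + ∑ k, ∑ j, Γ j k j x * X k x

/-- The second order operator `Λ(ψ) := Div(Div(ψ a) a)`. -/
noncomputable def Lam {d : ℕ} (Γ : Fin d → Fin d → Fin d → (Fin d → ℝ) → ℝ)
    (a : Fin d → (Fin d → ℝ) → ℝ) (ψ : (Fin d → ℝ) → ℝ) (x : Fin d → ℝ) : ℝ :=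
  DivVF Γ (fun l y => DivVF Γ (fun j z => ψ z * a j z) y * a l y) x

lemma pd_congr {d : ℕ} {j : Fin d} {f g : (Fin d → ℝ) → ℝ} {x : Fin d → ℝ}
    (h : f =ᶠ[nhds x] g) : pd j f x = pd j g x := by
  unfold pd; rw [h.fderiv_eq]

lemma pd_const {d : ℕ} (j : Fin d) (c : ℝ) (x : Fin d → ℝ) : pd j (fun _ => c) x = 0 := by
  simp [pd]

lemma pd_mul {d : ℕ} {j : Fin d} {f g : (Fin d → ℝ) → ℝ} {x : Fin d → ℝ}
    (hf : DifferentiableAt ℝ f x) (hg : DifferentiableAt ℝ g x) :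
    pd j (fun y => f y * g y) x = pd j f x * g x + f x * pd j g x := by
  unfold pd; rw [fderiv_fun_mul hf hg]; simp; ring

lemma pd_add {d : ℕ} {j : Fin d} {f g : (Fin d → ℝ) → ℝ} {x : Fin d → ℝ}
    (hf : DifferentiableAt ℝ f x) (hg : DifferentiableAt ℝ g x) :
    pd j (fun y => f y + g y) x = pd j f x + pd j g x := by
  unfold pd; rw [fderiv_fun_add hf hg]; simp

lemma pd_sum {d n : ℕ} {j : Fin d} {f : Fin n → (Fin d → ℝ) → ℝ} {x : Fin d → ℝ}
    (hf : ∀ i, DifferentiableAt ℝ (f i) x) :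
    pd j (fun y => ∑ i, f i y) x = ∑ i, pd j (f i) x := by
  unfold pd; rw [fderiv_fun_sum (fun i _ => hf i)]; simp

lemma pd_comp {d : ℕ} {j : Fin d} {F : ℝ → ℝ} {ρ : (Fin d → ℝ) → ℝ} {x : Fin d → ℝ}
    (hF : DifferentiableAt ℝ F (ρ x)) (hρ : DifferentiableAt ℝ ρ x) :
    pd j (fun y => F (ρ y)) x = deriv F (ρ x) * pd j ρ x := by
  unfold pd
  rw [show (fun y => F (ρ y)) = F ∘ ρ from rfl, fderiv_comp x hF hρ]
  simp only [ContinuousLinearMap.coe_comp', Function.comp_apply]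
  rw [show (fderiv ℝ ρ x) (Pi.single j 1) = ((fderiv ℝ ρ x) (Pi.single j 1)) • (1:ℝ) by simp,
    ContinuousLinearMap.map_smul]
  simp [fderiv_apply_one_eq_deriv]; ring

lemma pd_diffAt {d : ℕ} {f : (Fin d → ℝ) → ℝ} {x : Fin d → ℝ}
    (h : ContDiffAt ℝ 2 f x) (j : Fin d) : DifferentiableAt ℝ (fun y => pd j f y) x := by
  have h1 : ContDiffAt ℝ 1 (fderiv ℝ f) x := h.fderiv_right (by norm_num)
  exact (h1.clm_apply contDiffAt_const).differentiableAt one_ne_zero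

lemma DivVF_mul {d : ℕ} {Γ : Fin d → Fin d → Fin d → (Fin d → ℝ) → ℝ}
    {a : Fin d → (Fin d → ℝ) → ℝ} {ψ : (Fin d → ℝ) → ℝ} {y : Fin d → ℝ}
    (hψ : DifferentiableAt ℝ ψ y) (ha : ∀ j, DifferentiableAt ℝ (a j) y) :
    DivVF Γ (fun j z => ψ z * a j z) y
      = ψ y * DivVF Γ a y + ∑ j, a j y * pd j ψ y := by
  unfold DivVF
  rw [Finset.sum_congr rfl (fun j _ => pd_mul hψ (ha j))]
  simp only [Finset.sum_add_distrib, Finset.mul_sum, mul_add]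
  rw [Finset.sum_congr rfl (fun j (_: j ∈ Finset.univ) => show pd j ψ y * a j y = a j y * pd j ψ y by ring),
    Finset.sum_congr rfl (fun j (_: j ∈ Finset.univ) => show ψ y * pd j (a j) y = ψ y * pd j (a j) y from rfl)]
  have h2 : ∀ k, ∑ j, Γ j k j y * (ψ y * a k y) = ∑ j, ψ y * (Γ j k j y * a k y) := by
    intro k; exact Finset.sum_congr rfl (fun j _ => by ring)
  rw [Finset.sum_congr rfl (fun k (_: k ∈ Finset.univ) => h2 k)]
  ring

lemma DivVF_a_diffAt {d : ℕ} {U : Set (Fin d → ℝ)} (hU : IsOpen U)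
    {Γ : Fin d → Fin d → Fin d → (Fin d → ℝ) → ℝ}
    (hΓ : ∀ k i j, ContDiffOn ℝ 1 (Γ k i j) U)
    {a : Fin d → (Fin d → ℝ) → ℝ} (ha : ∀ l, ContDiffOn ℝ 2 (a l) U)
    {x : Fin d → ℝ} (hx : x ∈ U) :
    DifferentiableAt ℝ (fun y => DivVF Γ a y) x := by
  have haa : ∀ l, ContDiffAt ℝ 2 (a l) x := fun l => (ha l).contDiffAt (hU.mem_nhds hx)
  have hΓa : ∀ k i j, DifferentiableAt ℝ (Γ k i j) x := fun k i j =>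
    (((hΓ k i j).contDiffAt (hU.mem_nhds hx)).differentiableAt one_ne_zero)
  unfold DivVF
  apply DifferentiableAt.add
  · exact DifferentiableAt.fun_sum (fun j _ => pd_diffAt (haa j) j)
  · exact DifferentiableAt.fun_sum (fun k _ => DifferentiableAt.fun_sum (fun j _ =>
      (hΓa j k j).mul ((haa k).differentiableAt (by norm_num))))

lemma LamFormula {d : ℕ} {U : Set (Fin d → ℝ)} (hU : IsOpen U)
    {Γ : Fin d → Fin d → Fin d → (Fin d → ℝ) → ℝ}
    (hΓ : ∀ k i j, ContDiffOn ℝ 1 (Γ k i j) U)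
    {a : Fin d → (Fin d → ℝ) → ℝ} (ha : ∀ l, ContDiffOn ℝ 2 (a l) U)
    {ψ : (Fin d → ℝ) → ℝ} (hψ : ContDiffOn ℝ 2 ψ U)
    {x : Fin d → ℝ} (hx : x ∈ U) :
    Lam Γ a ψ x
      = ψ x * (DivVF Γ a x ^ 2 + ∑ l, a l x * pd l (fun y => DivVF Γ a y) x)
        + 2 * DivVF Γ a x * (∑ j, a j x * pd j ψ x)
        + ∑ l, a l x * pd l (fun y => ∑ j, a j y * pd j ψ y) x := by
  have hψ2 : ∀ y ∈ U, ContDiffAt ℝ 2 ψ y := fun y hy => hψ.contDiffAt (hU.mem_nhds hy)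
  have ha2 : ∀ (l) (y), y ∈ U → ContDiffAt ℝ 2 (a l) y :=
    fun l y hy => (ha l).contDiffAt (hU.mem_nhds hy)
  have hψd : ∀ y ∈ U, DifferentiableAt ℝ ψ y :=
    fun y hy => (hψ2 y hy).differentiableAt (by norm_num)
  have had : ∀ (l) (y), y ∈ U → DifferentiableAt ℝ (a l) y :=
    fun l y hy => (ha2 l y hy).differentiableAt (by norm_num)
  set B : (Fin d → ℝ) → ℝ := fun y => DivVF Γ a y with hB
  set A : (Fin d → ℝ) → ℝ := fun y => ∑ j, a j y * pd j ψ y with hA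
  have hBd : DifferentiableAt ℝ B x := DivVF_a_diffAt hU hΓ ha hx
  have hAd : DifferentiableAt ℝ A x :=
    DifferentiableAt.fun_sum (fun j _ => (had j x hx).mul (pd_diffAt (hψ2 x hx) j))
  have hEq : ∀ y ∈ U, DivVF Γ (fun j z => ψ z * a j z) y = ψ y * B y + A y :=
    fun y hy => DivVF_mul (hψd y hy) (fun j => had j y hy)
  have key : ∀ l, pd l (fun y => DivVF Γ (fun j z => ψ z * a j z) y * a l y) x
      = (pd l ψ x * B x + ψ x * pd l B x + pd l A x) * a l x
        + (ψ x * B x + A x) * pd l (a l) x := by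
    intro l
    have hev : (fun y => DivVF Γ (fun j z => ψ z * a j z) y * a l y)
        =ᶠ[nhds x] (fun y => (ψ y * B y + A y) * a l y) :=
      Filter.eventuallyEq_of_mem (hU.mem_nhds hx) (fun y hy => by rw [hEq y hy])
    rw [pd_congr hev,
      pd_mul (f := fun y => ψ y * B y + A y) (((hψd x hx).mul hBd).add hAd) (had l x hx),
      pd_add (f := fun y => ψ y * B y) ((hψd x hx).mul hBd) hAd,
      pd_mul (hψd x hx) hBd]
  rw [Lam, DivVF]
  rw [Finset.sum_congr rfl (fun l (_ : l ∈ Finset.univ) => key l)]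
  have hGam : ∀ k, ∑ j, Γ j k j x * (DivVF Γ (fun j z => ψ z * a j z) x * a k x)
      = (ψ x * B x + A x) * ∑ j, Γ j k j x * a k x := by
    intro k
    rw [Finset.mul_sum]
    exact Finset.sum_congr rfl (fun j _ => by rw [hEq x hx]; ring)
  rw [Finset.sum_congr rfl (fun k (_ : k ∈ Finset.univ) => hGam k), ← Finset.mul_sum]
  have hsplit : ∀ l, (pd l ψ x * B x + ψ x * pd l B x + pd l A x) * a l x
        + (ψ x * B x + A x) * pd l (a l) x
      = B x * (a l x * pd l ψ x) + ψ x * (a l x * pd l B x) + a l x * pd l A x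
        + (ψ x * B x + A x) * pd l (a l) x := fun l => by ring
  rw [Finset.sum_congr rfl (fun l (_ : l ∈ Finset.univ) => hsplit l)]
  simp only [Finset.sum_add_distrib]
  have hBx : B x = (∑ l, pd l (a l) x) + ∑ k, ∑ j, Γ j k j x * a k x := by
    rw [hB]; rfl
  rw [← Finset.mul_sum, ← Finset.mul_sum, ← Finset.mul_sum,
    show DivVF Γ a x = B x from rfl, hBx,
    show A x = ∑ j, a j x * pd j ψ x from rfl]
  ring

/-- For a `C²` vector field `a`, `C¹` Christoffel symbols, `ρ ∈ C²(U)`,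
`F ∈ C²(ℝ)`: pointwise on `U`,
`F'(ρ) Λ(ρ) − Λ(F(ρ)) = G_F(ρ) Λ(1) − F''(ρ) (a(ρ))²`, where `G_F(ξ) = ξF'(ξ) − F(ξ)`
and `a(ρ) = a^j ∂_j ρ`. -/
theorem statement5 {d : ℕ} (U : Set (Fin d → ℝ)) (hU : IsOpen U)
    (Γ : Fin d → Fin d → Fin d → (Fin d → ℝ) → ℝ)
    (hΓ : ∀ k i j, ContDiffOn ℝ 1 (Γ k i j) U)
    (a : Fin d → (Fin d → ℝ) → ℝ) (ha : ∀ l, ContDiffOn ℝ 2 (a l) U)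
    (ρ : (Fin d → ℝ) → ℝ) (hρ : ContDiffOn ℝ 2 ρ U)
    (F : ℝ → ℝ) (hF : ContDiff ℝ 2 F) :
    ∀ x ∈ U,
      deriv F (ρ x) * Lam Γ a ρ x - Lam Γ a (fun y => F (ρ y)) x
        = (ρ x * deriv F (ρ x) - F (ρ x)) * Lam Γ a (fun _ => 1) x
          - deriv (deriv F) (ρ x) * (∑ j, a j x * pd j ρ x) ^ 2 := by
  intro x hx
  have hF' : ContDiff ℝ 1 (deriv F) := by
    have h2 : ContDiff ℝ ((1:ℕ∞) + 1) F := by exact_mod_cast hF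
    exact (contDiff_succ_iff_deriv.mp h2).2.2
  have hFd : Differentiable ℝ F := hF.differentiable (by norm_num)
  have hF'd : Differentiable ℝ (deriv F) := hF'.differentiable one_ne_zero
  have hρ2 : ∀ y ∈ U, ContDiffAt ℝ 2 ρ y := fun y hy => hρ.contDiffAt (hU.mem_nhds hy)
  have hρd : ∀ y ∈ U, DifferentiableAt ℝ ρ y :=
    fun y hy => (hρ2 y hy).differentiableAt (by norm_num)
  have had : ∀ (l) (y), y ∈ U → DifferentiableAt ℝ (a l) y :=
    fun l y hy => ((ha l).contDiffAt (hU.mem_nhds hy)).differentiableAt (by norm_num)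
  have hFρ : ContDiffOn ℝ 2 (fun y => F (ρ y)) U := hF.comp_contDiffOn hρ
  -- pointwise chain rule on U
  have hchain : ∀ y ∈ U, ∀ j : Fin d,
      pd j (fun z => F (ρ z)) y = deriv F (ρ y) * pd j ρ y :=
    fun y hy j => pd_comp (hFd (ρ y)) (hρd y hy)
  set Aρ : (Fin d → ℝ) → ℝ := fun y => ∑ j, a j y * pd j ρ y with hAρ
  have hAeq : ∀ y ∈ U, (∑ j, a j y * pd j (fun z => F (ρ z)) y) = deriv F (ρ y) * Aρ y := by
    intro y hy
    rw [hAρ]; simp only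
    rw [Finset.mul_sum]
    exact Finset.sum_congr rfl (fun j _ => by rw [hchain y hy j]; ring)
  have hAρd : DifferentiableAt ℝ Aρ x :=
    DifferentiableAt.fun_sum (fun j _ => (had j x hx).mul (pd_diffAt (hρ2 x hx) j))
  -- second-order chain rule for the Q-term
  have hQF : ∀ l : Fin d, pd l (fun y => ∑ j, a j y * pd j (fun z => F (ρ z)) y) x
      = deriv (deriv F) (ρ x) * pd l ρ x * Aρ x
        + deriv F (ρ x) * pd l Aρ x := by
    intro l
    have hev : (fun y => ∑ j, a j y * pd j (fun z => F (ρ z)) y)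
        =ᶠ[nhds x] (fun y => deriv F (ρ y) * Aρ y) :=
      Filter.eventuallyEq_of_mem (hU.mem_nhds hx) (fun y hy => hAeq y hy)
    have hdFρ : DifferentiableAt ℝ (fun y => deriv F (ρ y)) x :=
      DifferentiableAt.comp x (hF'd (ρ x)) (hρd x hx)
    rw [pd_congr hev, pd_mul hdFρ hAρd, pd_comp (hF'd (ρ x)) (hρd x hx)]
  -- Λ(1)
  have hL1 : Lam Γ a (fun _ => (1:ℝ)) x
      = DivVF Γ a x ^ 2 + ∑ l, a l x * pd l (fun y => DivVF Γ a y) x := by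
    rw [LamFormula hU hΓ ha contDiffOn_const hx]
    have h0 : (fun y : Fin d → ℝ => ∑ j, a j y * pd j (fun _ => (1:ℝ)) y)
        = fun _ => (0:ℝ) := by
      funext y; simp [pd_const]
    simp [pd_const, h0]
  -- Λ(ρ) and Λ(F∘ρ)
  have hQ : (∑ l, a l x * pd l (fun y => ∑ j, a j y * pd j (fun z => F (ρ z)) y) x)
      = deriv (deriv F) (ρ x) * Aρ x * (∑ l, a l x * pd l ρ x)
        + deriv F (ρ x) * ∑ l, a l x * pd l Aρ x := by
    have hterm : ∀ l : Fin d,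
        a l x * pd l (fun y => ∑ j, a j y * pd j (fun z => F (ρ z)) y) x
          = deriv (deriv F) (ρ x) * Aρ x * (a l x * pd l ρ x)
            + deriv F (ρ x) * (a l x * pd l Aρ x) := fun l => by rw [hQF l]; ring
    rw [Finset.sum_congr rfl (fun l (_ : l ∈ Finset.univ) => hterm l),
      Finset.sum_add_distrib, ← Finset.mul_sum, ← Finset.mul_sum]
  rw [LamFormula hU hΓ ha hρ hx, LamFormula hU hΓ ha hFρ hx, hL1, hQ, hAeq x hx,
    show Aρ x = ∑ j, a j x * pd j ρ x from rfl]
  ring
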